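/- Let X ⊆ R^n be a nonempty closed convex set and f : R^n → R be differentiable with β-Lipschitz gradient. Fix η > 0, a point θ ∈ X, define the gradient mapping G(θ) = (1/η)(Proj_X(θ + η∇f(θ)) − θ) and θ⁺ = θ + ηG(θ). Then for every θ' ∈ X, ⟨∇f(θ⁺), θ' − θ⁺⟩ ≤ (1 + ηβ)‖G(θ)‖·‖θ' − θ⁺‖. -/

import Mathlib

open scoped RealInnerProductSpace

/-- Gradient mapping lemma: for the projected-gradient step `θ⁺ = Proj_X(θ + η ∇f(θ))`
with gradient mapping `G(θ) = (1/η)(θ⁺ − θ)`, one has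
`⟨∇f(θ⁺), θ' − θ⁺⟩ ≤ (1 + ηβ)‖G(θ)‖‖θ' − θ⁺‖` for all `θ' ∈ X`. -/
theorem stmt1 {n : ℕ} (X : Set (EuclideanSpace ℝ (Fin n))) (hXne : X.Nonempty)
    (hXcl : IsClosed X) (hXconv : Convex ℝ X)
    (f : EuclideanSpace ℝ (Fin n) → ℝ) (hf : Differentiable ℝ f)
    (β : ℝ) (hβ : 0 ≤ β)
    (hLip : ∀ x y, ‖gradient f x - gradient f y‖ ≤ β * ‖x - y‖)
    (η : ℝ) (hη : 0 < η)
    (θ : EuclideanSpace ℝ (Fin n)) (hθ : θ ∈ X)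
    (θplus : EuclideanSpace ℝ (Fin n)) (hmem : θplus ∈ X)
    (hproj : ∀ w ∈ X, dist (θ + η • gradient f θ) θplus ≤ dist (θ + η • gradient f θ) w) :
    ∀ θ' ∈ X, ⟪gradient f θplus, θ' - θplus⟫ ≤
      (1 + η * β) * ‖(1 / η) • (θplus - θ)‖ * ‖θ' - θplus‖ := by
  intro θ' hθ'
  set u := θ + η • gradient f θ with hu
  have hvar : ∀ w ∈ X, ⟪u - θplus, w - θplus⟫ ≤ 0 := by
    haveI : Nonempty X := hXne.to_subtype
    rw [← norm_eq_iInf_iff_real_inner_le_zero hXconv hmem]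
    apply le_antisymm
    · exact le_ciInf fun w => by simpa [dist_eq_norm] using hproj w w.2
    · exact ciInf_le ⟨0, by rintro x ⟨w, rfl⟩; positivity⟩ (⟨θplus, hmem⟩ : X)
  have h1 : η * ⟪gradient f θ, θ' - θplus⟫ ≤ ⟪θplus - θ, θ' - θplus⟫ := by
    have := hvar θ' hθ'
    rw [hu] at this
    have hexp : ⟪θ + η • gradient f θ - θplus, θ' - θplus⟫ =
        η * ⟪gradient f θ, θ' - θplus⟫ - ⟪θplus - θ, θ' - θplus⟫ := by
      rw [show θ + η • gradient f θ - θplus = η • gradient f θ - (θplus - θ) by abel,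
        inner_sub_left, real_inner_smul_left]
    linarith [hexp ▸ this]
  have h2 : ⟪gradient f θplus - gradient f θ, θ' - θplus⟫ ≤ β * ‖θplus - θ‖ * ‖θ' - θplus‖ := by
    calc ⟪gradient f θplus - gradient f θ, θ' - θplus⟫
        ≤ ‖gradient f θplus - gradient f θ‖ * ‖θ' - θplus‖ := real_inner_le_norm _ _
      _ ≤ (β * ‖θplus - θ‖) * ‖θ' - θplus‖ := by
          gcongr; exact hLip θplus θ
  have h3 : ⟪θplus - θ, θ' - θplus⟫ ≤ ‖θplus - θ‖ * ‖θ' - θplus‖ := real_inner_le_norm _ _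
  have hsplit : ⟪gradient f θplus, θ' - θplus⟫ =
      ⟪gradient f θplus - gradient f θ, θ' - θplus⟫ + ⟪gradient f θ, θ' - θplus⟫ := by
    rw [inner_sub_left]; ring
  have hnorm : ‖(1 / η) • (θplus - θ)‖ = (1 / η) * ‖θplus - θ‖ := by
    rw [norm_smul, Real.norm_eq_abs, abs_of_pos (by positivity)]
  rw [hsplit, hnorm]
  have hηg : ⟪gradient f θ, θ' - θplus⟫ ≤ (1 / η) * ‖θplus - θ‖ * ‖θ' - θplus‖ := by
    rw [div_mul_eq_mul_div, div_mul_eq_mul_div, le_div_iff₀ hη]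
    nlinarith [h1, h3]
  have hrhs : (1 + η * β) * (1 / η * ‖θplus - θ‖) * ‖θ' - θplus‖ =
      1 / η * ‖θplus - θ‖ * ‖θ' - θplus‖ + β * ‖θplus - θ‖ * ‖θ' - θplus‖ := by
    field_simp
  linarith [h2, hηg]
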